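/- (No heavy triangle, K₉ case.) For all γ, β > 0 there exist ε > 0, δ > 0 and n₀ such that the following holds for all n ≥ n₀. Let G be a graph on n vertices with independence number α(G) ≤ δ·√(n·log n), and let V₁, V₂, V₃ be pairwise disjoint vertex sets of equal size at least β·n such that each of the three pairs (V_i, V_j), i ≠ j, is ε-regular with edge density d(V_i, V_j) ≥ 2/3 + γ. Then G contains a clique on 9 vertices. -/

import Mathlib

set_option maxHeartbeats 1600000

open Finset

/-- The independence number of a graph: the largest size of an independent set of vertices. -/
noncomputable def indepNum {V : Type*} (G : SimpleGraph V) : ℕ :=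
  sSup {k | ∃ s : Finset V, (∀ v ∈ s, ∀ w ∈ s, v ≠ w → ¬ G.Adj v w) ∧ s.card = k}

/-- The edge density between two finite vertex sets, as a real number. -/
noncomputable def density {V : Type*} (G : SimpleGraph V) (A B : Finset V) : ℝ :=
  by classical exact (G.edgeDensity A B : ℝ)

/-- The pair `(A, B)` is `ε`-regular: all subpairs `(A', B')` with `|A'| ≥ ε|A|`,
`|B'| ≥ ε|B|` have density within `ε` of `d(A,B)`. -/
def IsRegularPair {V : Type*} (G : SimpleGraph V) (ε : ℝ) (A B : Finset V) : Prop :=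
  ∀ A' ⊆ A, ∀ B' ⊆ B, ε * A.card ≤ A'.card → ε * B.card ≤ B'.card →
    |density G A' B' - density G A B| ≤ ε

private lemma pow_aux (n : ℕ) : n * 2 ^ (n - 1) + (n * 2 ^ (n - 1) + 2 ^ n) = (n + 1) * 2 ^ (n + 1 - 1) := by
  cases n with
  | zero => simp
  | succ m => simp only [Nat.add_sub_cancel, pow_succ]; ring

lemma sum_powerset_card {V : Type*} [DecidableEq V] (H : Finset V) :
    ∑ T ∈ H.powerset, T.card = H.card * 2 ^ (H.card - 1) := by
  induction H using Finset.induction_on with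
  | empty => simp
  | @insert a s ha ih =>
    rw [Finset.sum_powerset_insert ha]
    have h1 : ∑ T ∈ s.powerset, (insert a T).card = ∑ T ∈ s.powerset, (T.card + 1) := by
      apply Finset.sum_congr rfl
      intro T hT
      rw [Finset.card_insert_of_notMem (fun h => ha (Finset.mem_powerset.1 hT h))]
    rw [h1, Finset.sum_add_distrib, ih, Finset.sum_const, Finset.card_powerset, smul_eq_mul,
      mul_one, Finset.card_insert_of_notMem ha]
    exact pow_aux s.card

lemma key_num (s k : ℕ) (hs : 1 ≤ s) : s * (2 ^ k + 1) ≤ 2 * (4 ^ s + k * 2 ^ (k - 1)) := by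
  have h4 : (4:ℕ) ^ s = 2 ^ s * 2 ^ s := by rw [← Nat.mul_pow]
  have hs2 : s ≤ 2 ^ s := Nat.le_of_lt (Nat.lt_two_pow_self (n := s))
  rcases le_or_gt k s with h | h
  · have h1 : s * 2 ^ k ≤ 4 ^ s := by
      calc s * 2 ^ k ≤ 2 ^ s * 2 ^ s :=
        Nat.mul_le_mul hs2 (Nat.pow_le_pow_right (by norm_num) h)
      _ = 4 ^ s := h4.symm
    have h2 : s ≤ 4 ^ s :=
      le_trans hs2 (by rw [h4]; exact Nat.le_mul_of_pos_left _ (Nat.pow_pos (by norm_num)))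
    calc s * (2 ^ k + 1) = s * 2 ^ k + s := by ring
      _ ≤ 4 ^ s + 4 ^ s := Nat.add_le_add h1 h2
      _ = 2 * 4 ^ s := by ring
      _ ≤ 2 * (4 ^ s + k * 2 ^ (k - 1)) := by omega
  · obtain ⟨m, rfl⟩ : ∃ m, k = m + 1 := ⟨k - 1, by omega⟩
    have h2k : 2 * ((m + 1) * 2 ^ (m + 1 - 1)) = (m + 1) * 2 ^ (m + 1) := by
      simp only [Nat.add_sub_cancel, pow_succ]; ring
    have hs2k : s ≤ 2 ^ (m + 1) := le_trans hs2 (Nat.pow_le_pow_right (by norm_num) (le_of_lt h))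
    calc s * (2 ^ (m + 1) + 1) = s * 2 ^ (m + 1) + s := by ring
      _ ≤ s * 2 ^ (m + 1) + 2 ^ (m + 1) := by omega
      _ = (s + 1) * 2 ^ (m + 1) := by ring
      _ ≤ (m + 1) * 2 ^ (m + 1) := Nat.mul_le_mul_right _ h
      _ = 2 * ((m + 1) * 2 ^ (m + 1 - 1)) := h2k.symm
      _ ≤ 2 * (4 ^ s + (m + 1) * 2 ^ (m + 1 - 1)) := by omega

lemma shearer_indep {V : Type*} [DecidableEq V] (G : SimpleGraph V) [DecidableRel G.Adj]
    (S : Finset V) (s : ℕ) (hs : 1 ≤ s)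
    (htri : ∀ a ∈ S, ∀ b ∈ S, ∀ c ∈ S, G.Adj a b → G.Adj a c → G.Adj b c → False)
    (hdeg : ∀ v ∈ S, (S.filter (fun u => G.Adj v u)).card ≤ 4 ^ s) :
    ∃ I ⊆ S, (∀ a ∈ I, ∀ b ∈ I, ¬ G.Adj a b) ∧ s * S.card ≤ 4 * 4 ^ s * I.card := by
  set d := 4 ^ s with hd
  set 𝓘 := S.powerset.filter (fun I => ∀ a ∈ I, ∀ b ∈ I, ¬ G.Adj a b) with h𝓘
  have hIempty : (∅ : Finset V) ∈ 𝓘 := by simp [h𝓘]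
  set w : V → Finset V → ℕ := fun v I => (if v ∈ I then d else 0) + (I.filter (fun u => G.Adj v u)).card with hw
  have hmem𝓘 : ∀ I ∈ 𝓘, I ⊆ S ∧ ∀ a ∈ I, ∀ b ∈ I, ¬ G.Adj a b := by
    intro I hI
    rw [h𝓘, Finset.mem_filter, Finset.mem_powerset] at hI
    exact hI
  -- key local estimate
  have key : ∀ v ∈ S, s * 𝓘.card ≤ 2 * ∑ I ∈ 𝓘, w v I := by
    intro v hv
    set g : Finset V → Finset V := fun I => I.filter (fun u => ¬ G.Adj v u ∧ u ≠ v) with hg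
    have hmaps : ∀ I ∈ 𝓘, g I ∈ 𝓘.image g := fun I hI' => Finset.mem_image_of_mem g hI'
    rw [Finset.card_eq_sum_card_fiberwise hmaps, ← Finset.sum_fiberwise_of_maps_to hmaps (w v),
      Finset.mul_sum, Finset.mul_sum]
    apply Finset.sum_le_sum
    intro J hJ
    obtain ⟨I₀, hI₀, hgI₀⟩ := Finset.mem_image.1 hJ
    obtain ⟨hI₀S, hI₀ind⟩ := hmem𝓘 I₀ hI₀
    have hJS : J ⊆ S := hgI₀ ▸ (Finset.filter_subset _ _).trans hI₀S
    have hJind : ∀ a ∈ J, ∀ b ∈ J, ¬ G.Adj a b := by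
      intro a ha b hb
      rw [← hgI₀] at ha hb
      exact hI₀ind a (Finset.filter_subset _ _ ha) b (Finset.filter_subset _ _ hb)
    have hJv : ∀ u ∈ J, ¬ G.Adj v u ∧ u ≠ v := by
      intro u hu; rw [← hgI₀, hg, Finset.mem_filter] at hu; exact hu.2
    have hvJ : v ∉ J := fun h => (hJv v h).2 rfl
    set H := (S.filter (fun u => G.Adj v u)).filter (fun u => ∀ x ∈ J, ¬ G.Adj u x) with hH
    have hHsub : H ⊆ S.filter (fun u => G.Adj v u) := Finset.filter_subset _ _
    have hHS : H ⊆ S := hHsub.trans (Finset.filter_subset _ _)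
    have hHadj : ∀ u ∈ H, G.Adj v u := by
      intro u hu; exact (Finset.mem_filter.1 (hHsub hu)).2
    have hHJ' : ∀ u ∈ H, ∀ x ∈ J, ¬ G.Adj u x := by
      intro u hu; exact (Finset.mem_filter.1 hu).2
    have hvH : v ∉ H := fun h => G.irrefl (hHadj v h)
    have hHJdisj : ∀ u ∈ H, u ∉ J := fun u hu hJ' => (hJv u hJ').1 (hHadj u hu)
    have hk : H.card ≤ d := le_trans (Finset.card_le_card hHsub) (hdeg v hv)
    -- fiber description
    have hfib : 𝓘.filter (fun I => g I = J) =
        insert (insert v J) (H.powerset.image (fun T => J ∪ T)) := by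
      ext I
      simp only [Finset.mem_filter, Finset.mem_insert, Finset.mem_image, Finset.mem_powerset]
      constructor
      · rintro ⟨hI, hgI⟩
        obtain ⟨hIS, hIind⟩ := hmem𝓘 I hI
        by_cases hvI : v ∈ I
        · left
          ext u
          simp only [Finset.mem_insert]
          constructor
          · intro hu
            by_cases huv : u = v
            · exact Or.inl huv
            · right
              rw [← hgI, hg, Finset.mem_filter]
              exact ⟨hu, hIind v hvI u hu, huv⟩
          · rintro (rfl | hu)
            · exact hvI
            · rw [← hgI] at hu; exact Finset.filter_subset _ _ hu
        · right
          refine ⟨I.filter (fun u => G.Adj v u), ?_, ?_⟩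
          · intro u hu
            rw [Finset.mem_filter] at hu
            rw [hH, Finset.mem_filter, Finset.mem_filter]
            exact ⟨⟨hIS hu.1, hu.2⟩, fun x hx => hIind u hu.1 x (by rw [← hgI] at hx; exact Finset.filter_subset _ _ hx)⟩
          · ext u
            simp only [Finset.mem_union, Finset.mem_filter]
            constructor
            · rintro (hu | hu)
              · rw [← hgI] at hu; exact Finset.filter_subset _ _ hu
              · exact hu.1
            · intro hu
              by_cases hadj : G.Adj v u
              · exact Or.inr ⟨hu, hadj⟩
              · left
                rw [← hgI, hg, Finset.mem_filter]
                exact ⟨hu, hadj, fun h => hvI (h ▸ hu)⟩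
      · rintro (rfl | ⟨T, hT, rfl⟩)
        · constructor
          · rw [h𝓘, Finset.mem_filter, Finset.mem_powerset]
            refine ⟨Finset.insert_subset hv hJS, ?_⟩
            intro a ha b hb
            rcases Finset.mem_insert.1 ha with rfl | ha'
            · rcases Finset.mem_insert.1 hb with rfl | hb'
              · exact fun h => G.irrefl h
              · exact (hJv b hb').1
            · rcases Finset.mem_insert.1 hb with rfl | hb'
              · exact fun h => (hJv a ha').1 h.symm
              · exact hJind a ha' b hb'
          · ext u
            rw [hg, Finset.mem_filter, Finset.mem_insert]
            constructor
            · rintro ⟨rfl | hu, hcond⟩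
              · exact absurd rfl hcond.2
              · exact hu
            · intro hu
              exact ⟨Or.inr hu, (hJv u hu).1, (hJv u hu).2⟩
        · constructor
          · rw [h𝓘, Finset.mem_filter, Finset.mem_powerset]
            refine ⟨Finset.union_subset hJS (hT.trans hHS), ?_⟩
            intro a ha b hb hab
            rcases Finset.mem_union.1 ha with ha' | ha'
            · rcases Finset.mem_union.1 hb with hb' | hb'
              · exact hJind a ha' b hb' hab
              · exact hHJ' b (hT hb') a ha' hab.symm
            · rcases Finset.mem_union.1 hb with hb' | hb'
              · exact hHJ' a (hT ha') b hb' hab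
              · exact htri v hv a (hHS (hT ha')) b (hHS (hT hb'))
                  (hHadj a (hT ha')) (hHadj b (hT hb')) hab
          · ext u
            rw [hg, Finset.mem_filter, Finset.mem_union]
            constructor
            · rintro ⟨hu | hu, hcond⟩
              · exact hu
              · exact absurd (hHadj u (hT hu)) hcond.1
            · intro hu
              exact ⟨Or.inl hu, (hJv u hu).1, (hJv u hu).2⟩
    -- cardinality and weight of the fiber
    have hvnot : (insert v J) ∉ H.powerset.image (fun T => J ∪ T) := by
      rw [Finset.mem_image]
      rintro ⟨T, hT, heq⟩
      rw [Finset.mem_powerset] at hT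
      have : v ∈ J ∪ T := heq ▸ Finset.mem_insert_self v J
      rcases Finset.mem_union.1 this with h | h
      · exact hvJ h
      · exact hvH (hT h)
    have hinj : Set.InjOn (fun T => J ∪ T) (H.powerset : Set (Finset V)) := by
      intro T₁ h₁ T₂ h₂ heq
      have heq' : J ∪ T₁ = J ∪ T₂ := heq
      rw [Finset.coe_powerset, Set.mem_preimage, Set.mem_powerset_iff] at h₁ h₂
      have e1 : ∀ T : Finset V, ↑T ⊆ (H : Set V) → (J ∪ T) \ J = T := by
        intro T hTH
        ext u
        simp only [Finset.mem_sdiff, Finset.mem_union]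
        constructor
        · rintro ⟨hu | hu, hnu⟩
          · exact absurd hu hnu
          · exact hu
        · intro hu
          exact ⟨Or.inr hu, hHJdisj u (hTH hu) ⟩
      calc T₁ = (J ∪ T₁) \ J := (e1 T₁ h₁).symm
        _ = (J ∪ T₂) \ J := by rw [heq']
        _ = T₂ := e1 T₂ h₂
    have hcard : (𝓘.filter (fun I => g I = J)).card = 2 ^ H.card + 1 := by
      rw [hfib, Finset.card_insert_of_notMem hvnot, Finset.card_image_of_injOn hinj,
        Finset.card_powerset]
    have hwinsert : w v (insert v J) = d := by
      rw [hw]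
      simp only [Finset.mem_insert_self, if_pos]
      have : (insert v J).filter (fun u => G.Adj v u) = ∅ := by
        rw [Finset.filter_eq_empty_iff]
        intro u hu
        rcases Finset.mem_insert.1 hu with rfl | hu'
        · exact fun h => G.irrefl h
        · exact (hJv u hu').1
      rw [this]
      simp
    have hwunion : ∀ T ∈ H.powerset, w v (J ∪ T) = T.card := by
      intro T hT
      rw [Finset.mem_powerset] at hT
      have hvnotm : v ∉ J ∪ T := by
        rw [Finset.mem_union]
        rintro (h | h)
        · exact hvJ h
        · exact hvH (hT h)
      rw [hw]
      simp only [if_neg hvnotm, zero_add]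
      congr 1
      ext u
      simp only [Finset.mem_filter, Finset.mem_union]
      constructor
      · rintro ⟨hu | hu, hadj⟩
        · exact absurd hadj (hJv u hu).1
        · exact hu
      · intro hu
        exact ⟨Or.inr hu, hHadj u (hT hu)⟩
    have hsum : ∑ I ∈ 𝓘.filter (fun I => g I = J), w v I = d + H.card * 2 ^ (H.card - 1) := by
      rw [hfib, Finset.sum_insert hvnot, Finset.sum_image (fun a ha b hb => hinj (by simpa using ha) (by simpa using hb)),
        hwinsert]
      congr 1
      rw [Finset.sum_congr rfl hwunion]
      exact sum_powerset_card H
    rw [hcard, hsum]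
    exact key_num s H.card hs
  have hglobal : s * S.card * 𝓘.card ≤ 2 * ∑ I ∈ 𝓘, ∑ v ∈ S, w v I := by
    rw [← Finset.sum_comm]
    calc s * S.card * 𝓘.card = ∑ _v ∈ S, s * 𝓘.card := by
          rw [Finset.sum_const, smul_eq_mul]; ring
      _ ≤ ∑ v ∈ S, 2 * ∑ I ∈ 𝓘, w v I := Finset.sum_le_sum key
      _ = 2 * ∑ v ∈ S, ∑ I ∈ 𝓘, w v I := (Finset.mul_sum _ _ _).symm
  have hinner : ∀ I ∈ 𝓘, ∑ v ∈ S, w v I ≤ 2 * (I.card * d) := by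
    intro I hI
    obtain ⟨hIS, _⟩ := hmem𝓘 I hI
    have hsplit : ∑ v ∈ S, w v I
        = (∑ v ∈ S, if v ∈ I then d else 0) + ∑ v ∈ S, (I.filter (fun u => G.Adj v u)).card := by
      rw [hw]; exact Finset.sum_add_distrib
    have h1 : (∑ v ∈ S, if v ∈ I then d else 0) ≤ I.card * d := by
      rw [Finset.sum_ite_mem, Finset.sum_const, smul_eq_mul]
      exact Nat.mul_le_mul_right d (Finset.card_le_card Finset.inter_subset_right)
    have h2 : ∑ v ∈ S, (I.filter (fun u => G.Adj v u)).card ≤ I.card * d := by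
      have hrw : ∑ v ∈ S, (I.filter (fun u => G.Adj v u)).card
          = ∑ u ∈ I, (S.filter (fun v => G.Adj v u)).card := by
        simp only [Finset.card_filter]
        exact Finset.sum_comm
      rw [hrw]
      have : ∀ u ∈ I, (S.filter (fun v => G.Adj v u)).card ≤ d := by
        intro u hu
        have : S.filter (fun v => G.Adj v u) = S.filter (fun v => G.Adj u v) := by
          apply Finset.filter_congr
          intro x _
          simp [G.adj_comm]
        rw [this]
        exact hdeg u (hIS hu)
      calc ∑ u ∈ I, (S.filter (fun v => G.Adj v u)).card ≤ ∑ _u ∈ I, d := Finset.sum_le_sum this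
        _ = I.card * d := by rw [Finset.sum_const, smul_eq_mul]
    omega
  obtain ⟨Imax, hImax, hImaxmax⟩ := Finset.exists_max_image 𝓘 Finset.card ⟨∅, hIempty⟩
  have hIpos : 0 < 𝓘.card := Finset.card_pos.2 ⟨∅, hIempty⟩
  have hfin : s * S.card * 𝓘.card ≤ (4 * d * Imax.card) * 𝓘.card := by
    calc s * S.card * 𝓘.card ≤ 2 * ∑ I ∈ 𝓘, ∑ v ∈ S, w v I := hglobal
      _ ≤ 2 * ∑ I ∈ 𝓘, 2 * (Imax.card * d) := by
          apply Nat.mul_le_mul_left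
          apply Finset.sum_le_sum
          intro I hI
          exact le_trans (hinner I hI)
            (Nat.mul_le_mul_left 2 (Nat.mul_le_mul_right d (hImaxmax I hI)))
      _ = (4 * d * Imax.card) * 𝓘.card := by rw [Finset.sum_const, smul_eq_mul]; ring
  obtain ⟨hImaxS, hImaxind⟩ := hmem𝓘 Imax hImax
  exact ⟨Imax, hImaxS, hImaxind, Nat.le_of_mul_le_mul_right hfin hIpos⟩

lemma indep_le_indepNum {n : ℕ} (G : SimpleGraph (Fin n)) (s : Finset (Fin n))
    (h : ∀ a ∈ s, ∀ b ∈ s, a ≠ b → ¬ G.Adj a b) : s.card ≤ indepNum G := by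
  apply le_csSup
  · refine ⟨n, ?_⟩
    rintro k ⟨t, -, rfl⟩
    calc t.card ≤ (Finset.univ : Finset (Fin n)).card := Finset.card_le_card (Finset.subset_univ t)
      _ = n := by simp
  · exact ⟨s, h, rfl⟩

lemma triangle_lemma (η : ℝ) (hη : 0 < η) :
    ∃ δ : ℝ, 0 < δ ∧ ∀ n : ℕ, 4 ≤ n → ∀ G : SimpleGraph (Fin n),
      (indepNum G : ℝ) ≤ δ * Real.sqrt (n * Real.logb 2 n) →
      ∀ S : Finset (Fin n), η * n ≤ (S.card : ℝ) →
      ∃ a ∈ S, ∃ b ∈ S, ∃ c ∈ S, G.Adj a b ∧ G.Adj a c ∧ G.Adj b c := by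
  classical
  refine ⟨min (1/2) (η/256), by positivity, ?_⟩
  intro n hn G hind S hS
  by_contra hcon
  push_neg at hcon
  have htri : ∀ a ∈ S, ∀ b ∈ S, ∀ c ∈ S, G.Adj a b → G.Adj a c → G.Adj b c → False := by
    intro a ha b hb c hc hab hac hbc
    exact hcon a ha b hb c hc hab hac hbc
  clear hcon
  -- numeric setup
  set L := Nat.log 2 n with hL
  have hL1 : 1 ≤ L := Nat.log_pos (by norm_num) (by omega)
  have hn0 : (0:ℕ) < n := by omega
  have h2L : 2 ^ L ≤ n := Nat.pow_log_le_self 2 (by omega)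
  have h2L' : n < 2 ^ (L + 1) := Nat.lt_pow_succ_log_self (by norm_num) n
  set P := n * L with hP
  have hP1 : 1 < P := by
    have : 4 * 1 ≤ n * L := Nat.mul_le_mul (by omega) hL1
    omega
  set s := Nat.clog 16 P with hs
  have hs1 : 1 ≤ s := Nat.clog_pos (by norm_num) hP1
  set d := 4 ^ s with hd
  have hsq : (16:ℕ) ^ s = d ^ 2 := by
    rw [hd, ← pow_mul, show (16:ℕ) = 4 ^ 2 by norm_num, ← pow_mul, mul_comm]
  have hPd : P ≤ d ^ 2 := by
    have h1 : P ≤ 16 ^ s := Nat.le_pow_clog (by norm_num) P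
    omega
  have hdP : d ^ 2 < 16 * P := by
    have h1 : 16 ^ (s - 1) < P := by
      have := Nat.pow_pred_clog_lt_self (b := 16) (by norm_num) (x := P) hP1
      simpa [hs] using this
    have h2 : (16:ℕ) ^ s = 16 * 16 ^ (s - 1) := by
      conv_lhs => rw [show s = (s-1) + 1 by omega]
      ring
    omega
  have hL4s : L ≤ 4 * s := by
    have h1 : (2:ℕ) ^ L ≤ 2 ^ (4 * s) := by
      calc (2:ℕ) ^ L ≤ n := h2L
        _ ≤ P := Nat.le_mul_of_pos_right n (by omega)
        _ ≤ 16 ^ s := Nat.le_pow_clog (by norm_num) P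
        _ = 2 ^ (4 * s) := by rw [show (16:ℕ) = 2 ^ 4 by norm_num, ← pow_mul]
    exact (Nat.pow_le_pow_iff_right (by norm_num)).1 h1
  clear_value L P s d
  -- real numbers
  set y := Real.sqrt (P : ℝ) with hy
  have hPr : (0:ℝ) < (P:ℝ) := by exact_mod_cast Nat.lt_of_lt_of_le Nat.zero_lt_one hP1.le
  have hy0 : 0 < y := Real.sqrt_pos.2 hPr
  have hyy : y * y = (P:ℝ) := Real.mul_self_sqrt hPr.le
  have hlogb : Real.logb 2 n ≤ 2 * L := by
    have h1 : (n:ℝ) ≤ (2:ℝ) ^ (L + 1) := by exact_mod_cast h2L'.le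
    have h2 : Real.logb 2 n ≤ Real.logb 2 ((2:ℝ) ^ (L + 1)) :=
      Real.logb_le_logb_of_le (by norm_num) (by positivity) h1
    have h3 : Real.logb 2 ((2:ℝ) ^ (L + 1)) = (L + 1 : ℕ) := by
      rw [Real.logb_pow]
      simp [Real.logb_self_eq_one]
    rw [h3] at h2
    calc Real.logb 2 n ≤ ((L:ℝ) + 1) := by exact_mod_cast h2
      _ ≤ 2 * L := by
        have : (1:ℝ) ≤ (L:ℝ) := by exact_mod_cast hL1
        linarith
  have hX : Real.sqrt ((n:ℝ) * Real.logb 2 n) ≤ Real.sqrt 2 * y := by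
    have h1 : (n:ℝ) * Real.logb 2 n ≤ 2 * (P:ℝ) := by
      have : (P:ℝ) = (n:ℝ) * L := by exact_mod_cast hP
      rw [this]
      have hnr : (0:ℝ) ≤ (n:ℝ) := by positivity
      nlinarith [hlogb]
    calc Real.sqrt ((n:ℝ) * Real.logb 2 n) ≤ Real.sqrt (2 * (P:ℝ)) := Real.sqrt_le_sqrt h1
      _ = Real.sqrt 2 * y := by rw [Real.sqrt_mul (by norm_num)]
  have hδX : min (1/2) (η/256) * Real.sqrt ((n:ℝ) * Real.logb 2 n)
      ≤ min (1/2) (η/256) * (Real.sqrt 2 * y) := by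
    apply mul_le_mul_of_nonneg_left hX (by positivity)
  by_cases hcase : ∃ v ∈ S, 4 ^ s ≤ (S.filter (fun u => G.Adj v u)).card
  · -- a big independent neighborhood
    obtain ⟨v, hv, hdv⟩ := hcase
    set N := S.filter (fun u => G.Adj v u) with hN
    have hNind : ∀ a ∈ N, ∀ b ∈ N, a ≠ b → ¬ G.Adj a b := by
      intro a ha b hb _ hab
      rw [hN, Finset.mem_filter] at ha hb
      exact htri v hv a ha.1 b hb.1 ha.2 hb.2 hab
    have h1 : (d:ℝ) ≤ (indepNum G : ℝ) := by
      have := le_trans hdv (indep_le_indepNum G N hNind)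
      rw [← hd] at this
      exact_mod_cast this
    have hyd : y ≤ (d:ℝ) := by
      rw [hy]
      have : ((P:ℝ)) ≤ ((d:ℝ)) ^ 2 := by exact_mod_cast hPd
      calc Real.sqrt (P:ℝ) ≤ Real.sqrt ((d:ℝ)^2) := Real.sqrt_le_sqrt this
        _ = (d:ℝ) := by rw [Real.sqrt_sq (by positivity)]
    have h2 : (d:ℝ) ≤ min (1/2) (η/256) * (Real.sqrt 2 * y) :=
      le_trans h1 (le_trans hind hδX)
    have h3 : min (1/2) (η/256) * (Real.sqrt 2 * y) ≤ (1/2) * (Real.sqrt 2 * y) := by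
      apply mul_le_mul_of_nonneg_right (min_le_left _ _) (by positivity)
    have hs2 : Real.sqrt 2 ≤ 3/2 := by
      rw [show (3:ℝ)/2 = Real.sqrt ((3/2)^2) by rw [Real.sqrt_sq]; norm_num]
      apply Real.sqrt_le_sqrt; norm_num
    nlinarith
  · push_neg at hcase
    have hdeg : ∀ v ∈ S, (S.filter (fun u => G.Adj v u)).card ≤ 4 ^ s :=
      fun v hv => (hcase v hv).le
    obtain ⟨I, hIS, hIind, hIcard⟩ := shearer_indep G S s hs1 htri hdeg
    have hIind' : ∀ a ∈ I, ∀ b ∈ I, a ≠ b → ¬ G.Adj a b := fun a ha b hb _ => hIind a ha b hb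
    have hIub : (I.card : ℝ) ≤ min (1/2) (η/256) * (Real.sqrt 2 * y) := by
      calc (I.card : ℝ) ≤ (indepNum G : ℝ) := by exact_mod_cast indep_le_indepNum G I hIind'
        _ ≤ _ := le_trans hind hδX
    -- lower bound on I.card
    have hmain : (s:ℝ) * S.card ≤ 4 * d * I.card := by
      rw [← hd] at hIcard
      exact_mod_cast hIcard
    have hdy : (d:ℝ) ≤ 4 * y := by
      have h1 : ((d:ℝ))^2 ≤ 16 * (P:ℝ) := by exact_mod_cast hdP.le
      have h2 : (4 * y)^2 = 16 * (P:ℝ) := by rw [mul_pow]; rw [show y^2 = y*y by ring, hyy]; norm_num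
      nlinarith [Real.sqrt_nonneg (P:ℝ), hy0]
    have hLs : (L:ℝ) ≤ 4 * s := by exact_mod_cast hL4s
    have hPnL : (P:ℝ) = (n:ℝ) * (L:ℝ) := by exact_mod_cast hP
    have hd0 : (0:ℝ) < d := by
      have : (0:ℕ) < d := by rw [hd]; positivity
      exact_mod_cast this
    have hI64 : (η/64) * y ≤ (I.card : ℝ) := by
      have h1 : η * (n:ℝ) * (L:ℝ) ≤ (S.card:ℝ) * (4 * s) := by
        have hnr : (0:ℝ) ≤ (n:ℝ) := by positivity
        have hLr : (0:ℝ) ≤ (L:ℝ) := by positivity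
        have hSr : (0:ℝ) ≤ (S.card:ℝ) := by positivity
        nlinarith
      -- η y^2 = η n L ≤ 4 s S.card ≤ 16 d I.card ≤ 64 y I.card
      have h2 : η * (y * y) ≤ 16 * ((d:ℝ) * I.card) := by
        calc η * (y * y) = η * (n:ℝ) * (L:ℝ) := by rw [hyy, hPnL]; ring
          _ ≤ (S.card:ℝ) * (4 * s) := h1
          _ = 4 * ((s:ℝ) * S.card) := by ring
          _ ≤ 4 * (4 * d * I.card) := by linarith
          _ = 16 * ((d:ℝ) * I.card) := by ring
      have h3 : (d:ℝ) * I.card ≤ 4 * y * I.card := by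
        apply mul_le_mul_of_nonneg_right hdy (by positivity)
      have h4 : η * (y * y) ≤ 64 * y * I.card := by linarith
      nlinarith [hy0]
    have hfin : min (1/2) (η/256) * (Real.sqrt 2 * y) < (η/64) * y := by
      have h1 : min (1/2) (η/256) ≤ η/256 := min_le_right _ _
      have hs2 : Real.sqrt 2 ≤ 3/2 := by
        rw [show (3:ℝ)/2 = Real.sqrt ((3/2)^2) by rw [Real.sqrt_sq]; norm_num]
        apply Real.sqrt_le_sqrt; norm_num
      have h2 : min (1/2) (η/256) * (Real.sqrt 2 * y) ≤ (η/256) * ((3/2) * y) := by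
        apply mul_le_mul h1 _ (by positivity) (by positivity)
        apply mul_le_mul_of_nonneg_right hs2 hy0.le
      calc min (1/2) (η/256) * (Real.sqrt 2 * y) ≤ (η/256) * ((3/2) * y) := h2
        _ < (η/64) * y := by nlinarith [hy0]
    linarith

lemma density_eq {V : Type*} (G : SimpleGraph V) [inst : DecidableRel G.Adj] (A B : Finset V) :
    density G A B = (G.edgeDensity A B : ℝ) := by
  unfold density
  congr!

lemma card_interedges_sum {V : Type*} [DecidableEq V] (G : SimpleGraph V) [DecidableRel G.Adj]
    (A B : Finset V) :
    (Rel.interedges G.Adj A B).card = ∑ a ∈ A, (B.filter (G.Adj a)).card := by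
  rw [Rel.interedges_eq_biUnion, Finset.card_biUnion]
  · apply Finset.sum_congr rfl
    intro a _
    rw [Finset.card_map]
  · intro a _ b _ hab
    simp only [Finset.disjoint_left, Finset.mem_map, Function.Embedding.coeFn_mk]
    rintro ⟨x, y⟩ ⟨u, _, h⟩ ⟨u', _, h'⟩
    apply hab
    have h1 : a = x := (Prod.mk.injEq _ _ _ _ ▸ h).1
    have h2 : b = x := (Prod.mk.injEq _ _ _ _ ▸ h').1
    rw [h1, h2]

lemma density_eq_sum {V : Type*} [DecidableEq V] (G : SimpleGraph V) [DecidableRel G.Adj]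
    (A B : Finset V) :
    density G A B = (∑ a ∈ A, ((B.filter (G.Adj a)).card : ℝ)) / (A.card * B.card) := by
  rw [density_eq, SimpleGraph.edgeDensity, Rel.edgeDensity]
  push_cast [card_interedges_sum]
  rfl

lemma bad_set_small {V : Type*} [DecidableEq V] (G : SimpleGraph V) [DecidableRel G.Adj]
    {ε : ℝ} (hε : 0 < ε) (A B : Finset V) (hA : (0:ℝ) < A.card)
    (hreg : IsRegularPair G ε A B)
    (D : Finset V) (hD : D ⊆ B) (hDc : ε * B.card ≤ D.card) (hD0 : (0:ℝ) < D.card) :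
    ((A.filter (fun x => ((D.filter (G.Adj x)).card : ℝ) < (density G A B - ε) * D.card)).card : ℝ)
      < ε * A.card := by
  by_contra hcon
  push_neg at hcon
  set Bad := A.filter (fun x => ((D.filter (G.Adj x)).card : ℝ) < (density G A B - ε) * D.card)
    with hBad
  have hBadsub : Bad ⊆ A := Finset.filter_subset _ _
  have hBad0 : (0:ℝ) < Bad.card := lt_of_lt_of_le (by positivity) hcon
  have hBadne : Bad.Nonempty := Finset.card_pos.1 (by exact_mod_cast hBad0)
  have hregBD := hreg Bad hBadsub D hD hcon hDc
  have hlow : density G A B - ε ≤ density G Bad D := by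
    have := abs_le.1 hregBD
    linarith [this.1]
  have hsum : (∑ x ∈ Bad, ((D.filter (G.Adj x)).card : ℝ))
      < Bad.card * ((density G A B - ε) * D.card) := by
    have h := Finset.sum_lt_sum_of_nonempty hBadne
      (f := fun x => ((D.filter (G.Adj x)).card : ℝ))
      (g := fun _ => (density G A B - ε) * D.card) ?_
    · rw [Finset.sum_const, nsmul_eq_mul] at h
      exact h
    · intro x hx
      exact (Finset.mem_filter.1 hx).2
  have hdens : density G Bad D < density G A B - ε := by
    rw [density_eq_sum]
    rw [div_lt_iff₀ (by positivity)]
    calc (∑ x ∈ Bad, ((D.filter (G.Adj x)).card : ℝ))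
        < Bad.card * ((density G A B - ε) * D.card) := hsum
      _ = (density G A B - ε) * ((Bad.card : ℝ) * D.card) := by ring
  linarith

lemma common_nbhd {V : Type*} [DecidableEq V] (G : SimpleGraph V) [DecidableRel G.Adj]
    (C : Finset V) (x₁ x₂ x₃ : V) (θ : ℝ)
    (h1 : θ * C.card ≤ ((C.filter (G.Adj x₁)).card : ℝ))
    (h2 : θ * C.card ≤ ((C.filter (G.Adj x₂)).card : ℝ))
    (h3 : θ * C.card ≤ ((C.filter (G.Adj x₃)).card : ℝ)) :
    (3 * θ - 2) * C.card
      ≤ ((C.filter (fun u => G.Adj x₁ u ∧ G.Adj x₂ u ∧ G.Adj x₃ u)).card : ℝ) := by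
  set W := C.filter (fun u => G.Adj x₁ u ∧ G.Adj x₂ u ∧ G.Adj x₃ u) with hW
  have hsub : C ⊆ ((C \ C.filter (G.Adj x₁)) ∪ (C \ C.filter (G.Adj x₂)))
      ∪ ((C \ C.filter (G.Adj x₃)) ∪ W) := by
    intro u hu
    simp only [Finset.mem_union, Finset.mem_sdiff, Finset.mem_filter, hW]
    by_cases a1 : G.Adj x₁ u
    · by_cases a2 : G.Adj x₂ u
      · by_cases a3 : G.Adj x₃ u
        · tauto
        · tauto
      · tauto
    · tauto
  have hcard : C.card ≤ (C \ C.filter (G.Adj x₁)).card + (C \ C.filter (G.Adj x₂)).card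
      + ((C \ C.filter (G.Adj x₃)).card + W.card) := by
    calc C.card ≤ _ := Finset.card_le_card hsub
      _ ≤ _ := Finset.card_union_le _ _
      _ ≤ _ := by
        apply Nat.add_le_add (Finset.card_union_le _ _) (Finset.card_union_le _ _)
  have hsd : ∀ y : V, (C \ C.filter (G.Adj y)).card = C.card - (C.filter (G.Adj y)).card :=
    fun y => Finset.card_sdiff_of_subset (Finset.filter_subset _ _)
  have hle : ∀ y : V, (C.filter (G.Adj y)).card ≤ C.card :=
    fun y => Finset.card_le_card (Finset.filter_subset _ _)
  have hcR : (C.card : ℝ) ≤ ((C.card : ℝ) - (C.filter (G.Adj x₁)).card)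
      + ((C.card : ℝ) - (C.filter (G.Adj x₂)).card)
      + (((C.card : ℝ) - (C.filter (G.Adj x₃)).card) + W.card) := by
    have := hcard
    rw [hsd x₁, hsd x₂, hsd x₃] at this
    have c1 := hle x₁; have c2 := hle x₂; have c3 := hle x₃
    push_cast [Nat.cast_sub (hle x₁), Nat.cast_sub (hle x₂), Nat.cast_sub (hle x₃)] at this ⊢
    exact_mod_cast this
  linarith

theorem no_heavy_triangle_K9 (γ β : ℝ) (hγ : 0 < γ) (hβ : 0 < β) :
    ∃ ε : ℝ, 0 < ε ∧ ∃ δ : ℝ, 0 < δ ∧ ∃ n₀ : ℕ, ∀ n : ℕ, n₀ ≤ n →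
      ∀ G : SimpleGraph (Fin n),
        (indepNum G : ℝ) ≤ δ * Real.sqrt (n * Real.logb 2 n) →
        ∀ V₁ V₂ V₃ : Finset (Fin n),
          Disjoint V₁ V₂ → Disjoint V₁ V₃ → Disjoint V₂ V₃ →
          V₁.card = V₂.card → V₂.card = V₃.card →
          β * n ≤ (V₁.card : ℝ) →
          IsRegularPair G ε V₁ V₂ → IsRegularPair G ε V₁ V₃ → IsRegularPair G ε V₂ V₃ →
          2 / 3 + γ ≤ density G V₁ V₂ → 2 / 3 + γ ≤ density G V₁ V₃ →
          2 / 3 + γ ≤ density G V₂ V₃ →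
          ¬ G.CliqueFree 9 := by
  classical
  have hγ'pos : 0 < min γ (1/3) := lt_min hγ (by norm_num)
  set γ' := min γ (1/3) with hγ'def
  have hγ'le : γ' ≤ 1/3 := min_le_right _ _
  have hγ'γ : γ' ≤ γ := min_le_left _ _
  have hηpos : 0 < γ' * γ' * β := by positivity
  set η := γ' * γ' * β with hηdef
  obtain ⟨δ, hδpos, hδ⟩ := triangle_lemma η hηpos
  refine ⟨γ'/2, by positivity, δ, hδpos, 4, ?_⟩
  intro n hn G hind V₁ V₂ V₃ h12 h13 h23 hc12 hc23 hsize hr12 hr13 hr23 hd12 hd13 hd23 hcf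
  have hεpos : (0:ℝ) < γ'/2 := by positivity
  have hnpos : (0:ℝ) < n := by
    have : (4:ℝ) ≤ n := by exact_mod_cast hn
    linarith
  have hm0 : (0:ℝ) < V₁.card := lt_of_lt_of_le (by positivity) hsize
  have hV2m : (V₂.card : ℝ) = (V₁.card : ℝ) := by exact_mod_cast congrArg Nat.cast hc12.symm
  have hV3m : (V₃.card : ℝ) = (V₁.card : ℝ) := by
    rw [← hV2m]; exact_mod_cast congrArg Nat.cast hc23.symm
  have hσ12 : 2/3 + γ' ≤ density G V₁ V₂ := le_trans (by linarith) hd12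
  have hσ13 : 2/3 + γ' ≤ density G V₁ V₃ := le_trans (by linarith) hd13
  have hσ23 : 2/3 + γ' ≤ density G V₂ V₃ := le_trans (by linarith) hd23
  have hσ12u : density G V₁ V₂ ≤ 1 := by
    rw [density_eq]; exact_mod_cast Rel.edgeDensity_le_one _ _ _
  have hσ13u : density G V₁ V₃ ≤ 1 := by
    rw [density_eq]; exact_mod_cast Rel.edgeDensity_le_one _ _ _
  have hσ23u : density G V₂ V₃ ≤ 1 := by
    rw [density_eq]; exact_mod_cast Rel.edgeDensity_le_one _ _ _
  -- Step A : good vertices of V₁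
  have hB12small := bad_set_small G hεpos V₁ V₂ hm0 hr12 V₂ (Finset.Subset.refl _)
    (by rw [hV2m]; nlinarith) (by rw [hV2m]; exact hm0)
  have hB13small := bad_set_small G hεpos V₁ V₃ hm0 hr13 V₃ (Finset.Subset.refl _)
    (by rw [hV3m]; nlinarith) (by rw [hV3m]; exact hm0)
  set B12 := V₁.filter
    (fun x => ((V₂.filter (G.Adj x)).card : ℝ) < (density G V₁ V₂ - γ'/2) * V₂.card) with hB12def
  set B13 := V₁.filter
    (fun x => ((V₃.filter (G.Adj x)).card : ℝ) < (density G V₁ V₃ - γ'/2) * V₃.card) with hB13def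
  set G₁ := V₁ \ (B12 ∪ B13) with hG₁def
  have hG1card : (2/3) * (V₁.card:ℝ) ≤ (G₁.card : ℝ) := by
    have h1 : V₁.card ≤ G₁.card + (B12 ∪ B13).card :=
      Finset.card_le_card_sdiff_add_card
    have h2 : (B12 ∪ B13).card ≤ B12.card + B13.card := Finset.card_union_le _ _
    have h3 : (V₁.card:ℝ) ≤ (G₁.card:ℝ) + ((B12.card:ℝ) + (B13.card:ℝ)) := by
      have := le_trans h1 (Nat.add_le_add_left h2 _)
      exact_mod_cast this
    nlinarith
  have hG1η : η * n ≤ (G₁.card : ℝ) := by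
    have : η * n ≤ (2/3) * (V₁.card:ℝ) := by nlinarith
    linarith
  obtain ⟨x1, hx1, x2, hx2, x3, hx3, a_x1x2, a_x1x3, a_x2x3⟩ := hδ n hn G hind G₁ hG1η
  have hx1V1 : x1 ∈ V₁ := (Finset.mem_sdiff.1 hx1).1
  have hx2V1 : x2 ∈ V₁ := (Finset.mem_sdiff.1 hx2).1
  have hx3V1 : x3 ∈ V₁ := (Finset.mem_sdiff.1 hx3).1
  have hdeg12 : ∀ x ∈ G₁, (density G V₁ V₂ - γ'/2) * V₂.card ≤ ((V₂.filter (G.Adj x)).card : ℝ) := by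
    intro x hx
    obtain ⟨hxV, hxnb⟩ := Finset.mem_sdiff.1 hx
    have hnb : x ∉ B12 := fun h => hxnb (Finset.mem_union_left _ h)
    rw [hB12def, Finset.mem_filter] at hnb
    push_neg at hnb
    exact hnb hxV
  have hdeg13 : ∀ x ∈ G₁, (density G V₁ V₃ - γ'/2) * V₃.card ≤ ((V₃.filter (G.Adj x)).card : ℝ) := by
    intro x hx
    obtain ⟨hxV, hxnb⟩ := Finset.mem_sdiff.1 hx
    have hnb : x ∉ B13 := fun h => hxnb (Finset.mem_union_right _ h)
    rw [hB13def, Finset.mem_filter] at hnb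
    push_neg at hnb
    exact hnb hxV
  -- Step B : common neighbourhoods of the x-triangle
  set U₂ := V₂.filter (fun u => G.Adj x1 u ∧ G.Adj x2 u ∧ G.Adj x3 u) with hU₂def
  set U₃ := V₃.filter (fun u => G.Adj x1 u ∧ G.Adj x2 u ∧ G.Adj x3 u) with hU₃def
  have hU2c := common_nbhd G V₂ x1 x2 x3 (density G V₁ V₂ - γ'/2)
    (hdeg12 x1 hx1) (hdeg12 x2 hx2) (hdeg12 x3 hx3)
  have hU3c := common_nbhd G V₃ x1 x2 x3 (density G V₁ V₃ - γ'/2)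
    (hdeg13 x1 hx1) (hdeg13 x2 hx2) (hdeg13 x3 hx3)
  have hU2card : (3/2) * γ' * (V₁.card:ℝ) ≤ (U₂.card : ℝ) := by
    rw [hV2m] at hU2c
    nlinarith
  have hU3card : (3/2) * γ' * (V₁.card:ℝ) ≤ (U₃.card : ℝ) := by
    rw [hV3m] at hU3c
    nlinarith
  have hU3pos : (0:ℝ) < U₃.card := by nlinarith
  -- Step C : good vertices of U₂ w.r.t. U₃
  have hB2small := bad_set_small G hεpos V₂ V₃ (by rw [hV2m]; exact hm0) hr23 U₃
    (Finset.filter_subset _ _) (by rw [hV3m]; nlinarith) hU3pos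
  set B2 := V₂.filter
    (fun y => ((U₃.filter (G.Adj y)).card : ℝ) < (density G V₂ V₃ - γ'/2) * U₃.card) with hB2def
  set G₂ := U₂ \ B2 with hG₂def
  have hG2card : γ' * (V₁.card:ℝ) ≤ (G₂.card : ℝ) := by
    have h1 : U₂.card ≤ G₂.card + B2.card := Finset.card_le_card_sdiff_add_card
    have h3 : (U₂.card:ℝ) ≤ (G₂.card:ℝ) + (B2.card:ℝ) := by exact_mod_cast h1
    rw [hV2m] at hB2small
    nlinarith
  have hG2η : η * n ≤ (G₂.card : ℝ) := by nlinarith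
  obtain ⟨y1, hy1, y2, hy2, y3, hy3, a_y1y2, a_y1y3, a_y2y3⟩ := hδ n hn G hind G₂ hG2η
  have hy1U2 : y1 ∈ U₂ := (Finset.mem_sdiff.1 hy1).1
  have hy2U2 : y2 ∈ U₂ := (Finset.mem_sdiff.1 hy2).1
  have hy3U2 : y3 ∈ U₂ := (Finset.mem_sdiff.1 hy3).1
  obtain ⟨hy1V2, a_x1y1, a_x2y1, a_x3y1⟩ := Finset.mem_filter.1 hy1U2
  obtain ⟨hy2V2, a_x1y2, a_x2y2, a_x3y2⟩ := Finset.mem_filter.1 hy2U2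
  obtain ⟨hy3V2, a_x1y3, a_x2y3, a_x3y3⟩ := Finset.mem_filter.1 hy3U2
  have hdegy : ∀ y ∈ G₂, (density G V₂ V₃ - γ'/2) * U₃.card ≤ ((U₃.filter (G.Adj y)).card : ℝ) := by
    intro y hy
    have hyV2 : y ∈ V₂ := Finset.mem_filter.1 ((Finset.mem_sdiff.1 hy).1) |>.1
    have hnb : y ∉ B2 := (Finset.mem_sdiff.1 hy).2
    rw [hB2def, Finset.mem_filter] at hnb
    push_neg at hnb
    exact hnb hyV2
  -- Step D : common neighbourhood of the y-triangle inside U₃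
  set W := U₃.filter (fun z => G.Adj y1 z ∧ G.Adj y2 z ∧ G.Adj y3 z) with hWdef
  have hWc := common_nbhd G U₃ y1 y2 y3 (density G V₂ V₃ - γ'/2)
    (hdegy y1 hy1) (hdegy y2 hy2) (hdegy y3 hy3)
  have hWη : η * n ≤ (W.card : ℝ) := by nlinarith
  obtain ⟨z1, hz1, z2, hz2, z3, hz3, a_z1z2, a_z1z3, a_z2z3⟩ := hδ n hn G hind W hWη
  obtain ⟨hz1U3, a_y1z1, a_y2z1, a_y3z1⟩ := Finset.mem_filter.1 hz1
  obtain ⟨hz2U3, a_y1z2, a_y2z2, a_y3z2⟩ := Finset.mem_filter.1 hz2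
  obtain ⟨hz3U3, a_y1z3, a_y2z3, a_y3z3⟩ := Finset.mem_filter.1 hz3
  obtain ⟨hz1V3, a_x1z1, a_x2z1, a_x3z1⟩ := Finset.mem_filter.1 hz1U3
  obtain ⟨hz2V3, a_x1z2, a_x2z2, a_x3z2⟩ := Finset.mem_filter.1 hz2U3
  obtain ⟨hz3V3, a_x1z3, a_x2z3, a_x3z3⟩ := Finset.mem_filter.1 hz3U3
  -- distinctness
  have hneq : ∀ {a b : Fin n} {S T : Finset (Fin n)},
      Disjoint S T → a ∈ S → b ∈ T → a ≠ b := by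
    intro a b S T hST ha hb h
    subst h
    exact Finset.disjoint_left.1 hST ha hb
  have n_x1y1 : x1 ≠ y1 := hneq h12 hx1V1 hy1V2
  have n_x1y2 : x1 ≠ y2 := hneq h12 hx1V1 hy2V2
  have n_x1y3 : x1 ≠ y3 := hneq h12 hx1V1 hy3V2
  have n_x2y1 : x2 ≠ y1 := hneq h12 hx2V1 hy1V2
  have n_x2y2 : x2 ≠ y2 := hneq h12 hx2V1 hy2V2
  have n_x2y3 : x2 ≠ y3 := hneq h12 hx2V1 hy3V2
  have n_x3y1 : x3 ≠ y1 := hneq h12 hx3V1 hy1V2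
  have n_x3y2 : x3 ≠ y2 := hneq h12 hx3V1 hy2V2
  have n_x3y3 : x3 ≠ y3 := hneq h12 hx3V1 hy3V2
  have n_x1z1 : x1 ≠ z1 := hneq h13 hx1V1 hz1V3
  have n_x1z2 : x1 ≠ z2 := hneq h13 hx1V1 hz2V3
  have n_x1z3 : x1 ≠ z3 := hneq h13 hx1V1 hz3V3
  have n_x2z1 : x2 ≠ z1 := hneq h13 hx2V1 hz1V3
  have n_x2z2 : x2 ≠ z2 := hneq h13 hx2V1 hz2V3
  have n_x2z3 : x2 ≠ z3 := hneq h13 hx2V1 hz3V3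
  have n_x3z1 : x3 ≠ z1 := hneq h13 hx3V1 hz1V3
  have n_x3z2 : x3 ≠ z2 := hneq h13 hx3V1 hz2V3
  have n_x3z3 : x3 ≠ z3 := hneq h13 hx3V1 hz3V3
  have n_y1z1 : y1 ≠ z1 := hneq h23 hy1V2 hz1V3
  have n_y1z2 : y1 ≠ z2 := hneq h23 hy1V2 hz2V3
  have n_y1z3 : y1 ≠ z3 := hneq h23 hy1V2 hz3V3
  have n_y2z1 : y2 ≠ z1 := hneq h23 hy2V2 hz1V3
  have n_y2z2 : y2 ≠ z2 := hneq h23 hy2V2 hz2V3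
  have n_y2z3 : y2 ≠ z3 := hneq h23 hy2V2 hz3V3
  have n_y3z1 : y3 ≠ z1 := hneq h23 hy3V2 hz1V3
  have n_y3z2 : y3 ≠ z2 := hneq h23 hy3V2 hz2V3
  have n_y3z3 : y3 ≠ z3 := hneq h23 hy3V2 hz3V3
  have n_x1x2 : x1 ≠ x2 := G.ne_of_adj a_x1x2
  have n_x1x3 : x1 ≠ x3 := G.ne_of_adj a_x1x3
  have n_x2x3 : x2 ≠ x3 := G.ne_of_adj a_x2x3
  have n_y1y2 : y1 ≠ y2 := G.ne_of_adj a_y1y2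
  have n_y1y3 : y1 ≠ y3 := G.ne_of_adj a_y1y3
  have n_y2y3 : y2 ≠ y3 := G.ne_of_adj a_y2y3
  have n_z1z2 : z1 ≠ z2 := G.ne_of_adj a_z1z2
  have n_z1z3 : z1 ≠ z3 := G.ne_of_adj a_z1z3
  have n_z2z3 : z2 ≠ z3 := G.ne_of_adj a_z2z3
  apply hcf ({x1, x2, x3, y1, y2, y3, z1, z2, z3} : Finset (Fin n))
  constructor
  · intro a ha b hb hne
    simp only [Finset.coe_insert, Set.mem_insert_iff, Finset.coe_singleton,
      Set.mem_singleton_iff] at ha hb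
    rcases ha with rfl | rfl | rfl | rfl | rfl | rfl | rfl | rfl | rfl <;>
      rcases hb with rfl | rfl | rfl | rfl | rfl | rfl | rfl | rfl | rfl <;>
      first
        | exact absurd rfl hne
        | assumption
        | solve_by_elim [SimpleGraph.Adj.symm]
  · rw [Finset.card_insert_of_notMem (by simp only [Finset.mem_insert, Finset.mem_singleton]; push_neg; exact ⟨n_x1x2, n_x1x3, n_x1y1, n_x1y2, n_x1y3, n_x1z1, n_x1z2, n_x1z3⟩),
      Finset.card_insert_of_notMem (by simp only [Finset.mem_insert, Finset.mem_singleton]; push_neg; exact ⟨n_x2x3, n_x2y1, n_x2y2, n_x2y3, n_x2z1, n_x2z2, n_x2z3⟩),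
      Finset.card_insert_of_notMem (by simp only [Finset.mem_insert, Finset.mem_singleton]; push_neg; exact ⟨n_x3y1, n_x3y2, n_x3y3, n_x3z1, n_x3z2, n_x3z3⟩),
      Finset.card_insert_of_notMem (by simp only [Finset.mem_insert, Finset.mem_singleton]; push_neg; exact ⟨n_y1y2, n_y1y3, n_y1z1, n_y1z2, n_y1z3⟩),
      Finset.card_insert_of_notMem (by simp only [Finset.mem_insert, Finset.mem_singleton]; push_neg; exact ⟨n_y2y3, n_y2z1, n_y2z2, n_y2z3⟩),
      Finset.card_insert_of_notMem (by simp only [Finset.mem_insert, Finset.mem_singleton]; push_neg; exact ⟨n_y3z1, n_y3z2, n_y3z3⟩),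
      Finset.card_insert_of_notMem (by simp only [Finset.mem_insert, Finset.mem_singleton]; push_neg; exact ⟨n_z1z2, n_z1z3⟩),
      Finset.card_insert_of_notMem (by simp only [Finset.mem_singleton]; exact n_z2z3),
      Finset.card_singleton]
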